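/- Let k be a commutative ring in which 2 is invertible, A a commutative k-algebra, λ an element of k, Ω̄ an A-module, d̄ : A → Ω̄ a k-linear derivation (d̄(fg) = f·d̄g + g·d̄f for all f,g ∈ A), ⟨·,·⟩ : Ω̄ × Ω̄ → A an A-bilinear map, and Δ̄ : A → A a k-linear map satisfying the polarization identity Δ̄(fg) = (Δ̄f)·g + f·(Δ̄g) + 2⟨d̄f, d̄g⟩ for all f,g ∈ A. On Ω := Ω̄ × A define a left action f ▷ (ω,a) := (f·ω, f·a) and a right action (ω,a) ◁ f := (ω·f, a·f + λ·⟨ω, d̄f⟩). Then: (i) ◁ is a unital, associative right A-action, i.e. ((ω,a) ◁ f) ◁ g = (ω,a) ◁ (fg); (ii) the left and right actions commute, (f ▷ (ω,a)) ◁ g = f ▷ ((ω,a) ◁ g), so Ω is an (A,A)-bimodule; and (iii) the map d : A → Ω, d f := (d̄f, (λ/2)·Δ̄f), obeys the Leibniz rule d(fg) = (d f) ◁ g + f ▷ (d g) for all f,g ∈ A. -/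

import Mathlib

/- Lemma 2.1 of the paper: the extended noncommutative first-order differential
calculus Ω¹ = Ω̄¹ ⊕ A·θ′, represented as pairs (ω, a) ∈ Ω̄ × A. -/

section

variable {k A Ω : Type*} [CommRing k] [CommRing A] [Algebra k A]
  [AddCommGroup Ω] [Module k Ω] [Module A Ω]

/-- The right action `(ω,a) ◁ f := (ω·f, a·f + λ·⟨ω, d̄f⟩)`. -/
def rAct (lam : k) (B : Ω →ₗ[A] Ω →ₗ[A] A) (dbar : A →ₗ[k] Ω)
    (p : Ω × A) (f : A) : Ω × A :=
  (f • p.1, p.2 * f + lam • B p.1 (dbar f))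

/-- The left action `f ▷ (ω,a) := (f·ω, f·a)`. -/
def lAct (f : A) (p : Ω × A) : Ω × A := (f • p.1, f * p.2)

/-- The quantum differential `d f := (d̄f, (λ/2)·Δ̄f)`. -/
def dQ [Invertible (2 : k)] (lam : k) (dbar : A →ₗ[k] Ω) (Δ : A →ₗ[k] A)
    (f : A) : Ω × A :=
  (dbar f, (⅟(2 : k) * lam) • Δ f)

theorem extended_calculus_bimodule_and_leibniz [Invertible (2 : k)] (lam : k)
    (dbar : A →ₗ[k] Ω)
    (hder : ∀ f g : A, dbar (f * g) = f • dbar g + g • dbar f)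
    (B : Ω →ₗ[A] Ω →ₗ[A] A) (Δ : A →ₗ[k] A)
    (hpol : ∀ f g : A, Δ (f * g) = Δ f * g + f * Δ g + 2 * B (dbar f) (dbar g)) :
    -- (i) ◁ is a unital associative right action
    (∀ (p : Ω × A) (f g : A),
      rAct lam B dbar (rAct lam B dbar p f) g = rAct lam B dbar p (f * g)) ∧
    (∀ p : Ω × A, rAct lam B dbar p 1 = p) ∧
    -- (ii) the left and right actions commute (bimodule property)
    (∀ (f : A) (p : Ω × A) (g : A),
      rAct lam B dbar (lAct f p) g = lAct f (rAct lam B dbar p g)) ∧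
    -- (iii) Leibniz rule for d
    (∀ f g : A,
      dQ lam dbar Δ (f * g)
        = rAct lam B dbar (dQ lam dbar Δ f) g + lAct f (dQ lam dbar Δ g)) := by
  have hd1 : dbar 1 = 0 := by
    have h := hder 1 1
    rw [mul_one, one_smul] at h
    exact left_eq_add.mp h
  refine ⟨?_, ?_, ?_, ?_⟩
  · intro p f g
    simp only [rAct, hder f g, Prod.mk.injEq, map_add, map_smul, smul_eq_mul,
      LinearMap.smul_apply]
    refine ⟨by rw [smul_smul, mul_comm], ?_⟩
    simp only [smul_add, Algebra.smul_def, smul_eq_mul]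
    ring
  · intro p
    simp [rAct, hd1]
  · intro f p g
    simp only [rAct, lAct, Prod.mk.injEq, map_smul, smul_eq_mul, LinearMap.smul_apply]
    refine ⟨smul_comm g f p.1, ?_⟩
    simp only [Algebra.smul_def, mul_add]
    ring
  · intro f g
    have h2 : (⅟(2 : k) * lam) • ((2 : A) * B (dbar f) (dbar g))
        = lam • B (dbar f) (dbar g) := by
      rw [two_mul, smul_add, ← two_smul k ((⅟(2:k)*lam) • (B (dbar f) (dbar g))),
        smul_smul, ← mul_assoc, mul_invOf_self, one_mul]
    simp only [dQ, rAct, lAct, Prod.mk.injEq, Prod.mk_add_mk]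
    refine ⟨by rw [hder f g]; abel, ?_⟩
    rw [hpol f g, smul_add, smul_add, h2, smul_mul_assoc, mul_smul_comm]
    abel

end
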